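/- Let (G_i)_{i∈I} be a family of groups, X a compact space, and ι : I → X a map. Then ∏_{i∈I} G_i is perfect if and only if for every p ∈ X the stalk at p of the direct image presheaf is perfect. -/

import Mathlib

open scoped commutatorElement

/-- `g` is a product of `n` commutators. -/
def IsProdOfCommutators {G : Type*} [Group G] (g : G) (n : ℕ) : Prop :=
  ∃ a b : Fin n → G, g = (List.ofFn fun k => ⁅a k, b k⁆).prod

lemma IsProdOfCommutators.pad {G : Type*} [Group G] {g : G} {n : ℕ}
    (h : IsProdOfCommutators g n) {N : ℕ} (hn : n ≤ N) : IsProdOfCommutators g N := by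
  induction N, hn using Nat.le_induction with
  | base => exact h
  | succ N hN ih =>
    obtain ⟨a, b, hab⟩ := ih
    refine ⟨Fin.snoc a 1, Fin.snoc b 1, ?_⟩
    rw [List.ofFn_succ']
    simp [hab]

lemma list_prod_apply {I : Type*} (G : I → Type*) [∀ i, Monoid (G i)] (i : I)
    (l : List (∀ i, G i)) : l.prod i = (l.map fun f => f i).prod := by
  induction l with
  | nil => rfl
  | cons x xs ih => simp [ih]

lemma mem_commutator_iff_isProd {G : Type*} [Group G] (g : G) :
    g ∈ commutator G ↔ ∃ n, IsProdOfCommutators g n := by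
  constructor
  · intro hg
    rw [commutator_eq_closure, ← Subgroup.mem_toSubmonoid,
      Subgroup.closure_toSubmonoid] at hg
    obtain ⟨l, hl, hprod⟩ := Submonoid.exists_list_of_mem_closure hg
    have hl' : ∀ y ∈ l, y ∈ commutatorSet G := by
      intro y hy
      rcases hl y hy with h | h
      · exact h
      · obtain ⟨a, b, hab⟩ := h
        exact ⟨b, a, by rw [← commutatorElement_inv, hab, inv_inv]⟩
    have hmem : ∀ k : Fin l.length, l.get k ∈ l := fun k => l.get_mem k
    refine ⟨l.length, fun k => (hl' _ (hmem k)).choose,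
      fun k => (hl' _ (hmem k)).choose_spec.choose, ?_⟩
    have hle : l = List.ofFn l.get := (List.ofFn_get l).symm
    conv_lhs => rw [← hprod, hle]
    congr 1
    exact congrArg List.ofFn (funext fun k =>
      ((hl' _ (hmem k)).choose_spec.choose_spec).symm)
  · rintro ⟨n, a, b, hab⟩
    rw [hab]
    apply Subgroup.list_prod_mem
    intro x hx
    obtain ⟨k, hk⟩ := List.mem_ofFn.mp hx
    rw [← hk]
    exact Subgroup.commutator_mem_commutator (Subgroup.mem_top _) (Subgroup.mem_top _)

lemma pi_isProd {I : Type*} (G : I → Type*) [∀ i, Group (G i)] (g : ∀ i, G i) (N : ℕ)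
    (a b : ∀ i, Fin N → G i)
    (h : ∀ i, g i = (List.ofFn fun k => ⁅a i k, b i k⁆).prod) :
    IsProdOfCommutators g N := by
  refine ⟨fun k i => a i k, fun k i => b i k, ?_⟩
  funext i
  rw [list_prod_apply, List.map_ofFn, h i]
  rfl

/-- Let `(G i)_{i ∈ I}` be a family of groups, `X` a compact space, and `ι : I → X` a map.
Then `∏ i, G i` is perfect if and only if for every `p ∈ X` the stalk at `p` of the direct
image presheaf is perfect, i.e. every `g` agrees, on `ι⁻¹(U)` for some open neighborhood `U`
of `p`, with a product of commutators. -/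
theorem pi_perfect_iff_stalks_perfect
    {I : Type*} (G : I → Type*) [∀ i, Group (G i)]
    {X : Type*} [TopologicalSpace X] [CompactSpace X] (ι : I → X) :
    commutator (∀ i, G i) = ⊤ ↔
      ∀ p : X, ∀ g : ∀ i, G i, ∃ (n : ℕ) (c : ∀ i, G i) (U : Set X),
        IsProdOfCommutators c n ∧ IsOpen U ∧ p ∈ U ∧ ∀ i : I, ι i ∈ U → g i = c i := by
  constructor
  · intro h p g
    have hg : g ∈ commutator (∀ i, G i) := h ▸ Subgroup.mem_top g
    obtain ⟨n, hn⟩ := (mem_commutator_iff_isProd g).mp hg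
    exact ⟨n, g, Set.univ, hn, isOpen_univ, trivial, fun i _ => rfl⟩
  · intro h
    rw [eq_top_iff]
    intro g _
    choose nn cc UU hP hO hp hA using fun p => h p g
    have hcover : (Set.univ : Set X) ⊆ ⋃ p, UU p := fun x _ =>
      Set.mem_iUnion.mpr ⟨x, hp x⟩
    obtain ⟨t, ht⟩ := isCompact_univ.elim_finite_subcover UU hO hcover
    have hpick : ∀ i : I, ∃ p ∈ t, ι i ∈ UU p := by
      intro i
      have := ht (Set.mem_univ (ι i))
      simpa using this
    choose pk hpkt hpkU using hpick
    set N := t.sup nn with hN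
    have hpad : ∀ i : I, IsProdOfCommutators (cc (pk i)) N :=
      fun i => (hP (pk i)).pad (Finset.le_sup (hpkt i))
    choose a b hab using hpad
    apply (mem_commutator_iff_isProd g).mpr
    refine ⟨N, pi_isProd G g N (fun i k => a i k i) (fun i k => b i k i) ?_⟩
    intro i
    rw [hA (pk i) i (hpkU i)]
    have h1 := congrFun (hab i) i
    rw [h1, list_prod_apply, List.map_ofFn]
    rfl
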